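/- Let M ≥ 1 and r ≥ 1, and let H^{[kj]}, for k, j ∈ {1,2,3}, be invertible diagonal M × M complex matrices such that the product T = (H^{[13]})^{-1} H^{[23]} (H^{[21]})^{-1} H^{[12]} (H^{[32]})^{-1} H^{[31]} has pairwise distinct diagonal entries. Suppose V^{[1]}, V^{[2]}, V^{[3]} are M × r complex matrices, each of rank r, satisfying the full interference alignment conditions: span(H^{[13]} V^{[3]}) = span(H^{[12]} V^{[2]}), span(H^{[23]} V^{[3]}) = span(H^{[21]} V^{[1]}), and span(H^{[32]} V^{[2]}) = span(H^{[31]} V^{[1]}). Then the desired-signal subspace and the interference subspace at receiver 1 intersect nontrivially: span(H^{[11]} V^{[1]}) ∩ span(H^{[12]} V^{[2]}) ≠ {0}. -/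

import Mathlib

open Matrix

namespace IAAux

variable {M : ℕ}

lemma diag_mul_apply {A B : Matrix (Fin M) (Fin M) ℂ} (hA : A.IsDiag) (i j : Fin M) :
    (A * B) i j = A i i * B i j := by
  rw [Matrix.mul_apply]
  refine Finset.sum_eq_single i (fun b _ hb => ?_) (by simp)
  rw [hA (Ne.symm hb), zero_mul]

lemma mul_diag_apply {A B : Matrix (Fin M) (Fin M) ℂ} (hB : B.IsDiag) (i j : Fin M) :
    (A * B) i j = A i j * B j j := by
  rw [Matrix.mul_apply]
  refine Finset.sum_eq_single j (fun b _ hb => ?_) (by simp)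
  rw [hB hb, mul_zero]

lemma mul_isDiag {A B : Matrix (Fin M) (Fin M) ℂ} (hA : A.IsDiag) (hB : B.IsDiag) :
    (A * B).IsDiag := fun i j hij => by
  show (A * B) i j = 0
  rw [diag_mul_apply hA, hB hij, mul_zero]

lemma diag_ne_zero {A : Matrix (Fin M) (Fin M) ℂ} (hA : A.IsDiag) (hu : IsUnit A.det)
    (i : Fin M) : A i i ≠ 0 := by
  have h := Matrix.nonsing_inv_mul A hu
  have h1 : (A⁻¹ * A) i i = 1 := by rw [h, Matrix.one_apply_eq]
  rw [mul_diag_apply hA] at h1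
  intro h0
  rw [h0, mul_zero] at h1
  exact zero_ne_one h1

lemma inv_isDiag {A : Matrix (Fin M) (Fin M) ℂ} (hA : A.IsDiag) (hu : IsUnit A.det) :
    A⁻¹.IsDiag := by
  have h : A * Matrix.diagonal (fun i => (A i i)⁻¹) = 1 := by
    ext i j
    rw [mul_diag_apply (Matrix.isDiag_diagonal _), Matrix.diagonal_apply_eq]
    by_cases hij : i = j
    · subst hij
      rw [mul_inv_cancel₀ (diag_ne_zero hA hu i), Matrix.one_apply_eq]
    · rw [hA hij, zero_mul, Matrix.one_apply_ne hij]
  rw [Matrix.inv_eq_right_inv h]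
  exact Matrix.isDiag_diagonal _

lemma inv_det_isUnit {A : Matrix (Fin M) (Fin M) ℂ} (hu : IsUnit A.det) :
    IsUnit A⁻¹.det := by
  refine IsUnit.of_mul_eq_one (a := A⁻¹.det) A.det ?_
  rw [← Matrix.det_mul, Matrix.nonsing_inv_mul A hu, Matrix.det_one]

lemma range_mul {r : ℕ} (A : Matrix (Fin M) (Fin M) ℂ) (V : Matrix (Fin M) (Fin r) ℂ) :
    LinearMap.range (A * V).mulVecLin
      = Submodule.map A.mulVecLin (LinearMap.range V.mulVecLin) := by
  rw [Matrix.mulVecLin_mul, LinearMap.range_comp]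

lemma map_map (A B : Matrix (Fin M) (Fin M) ℂ) (W : Submodule ℂ (Fin M → ℂ)) :
    Submodule.map A.mulVecLin (Submodule.map B.mulVecLin W)
      = Submodule.map (A * B).mulVecLin W := by
  rw [Matrix.mulVecLin_mul, Submodule.map_comp]

lemma map_inv_map {A : Matrix (Fin M) (Fin M) ℂ} (hu : IsUnit A.det)
    (W : Submodule ℂ (Fin M → ℂ)) :
    Submodule.map A⁻¹.mulVecLin (Submodule.map A.mulVecLin W) = W := by
  rw [map_map, Matrix.nonsing_inv_mul A hu, Matrix.mulVecLin_one, Submodule.map_id]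

lemma single_mem_map {D : Matrix (Fin M) (Fin M) ℂ} (hd : D.IsDiag) (hu : IsUnit D.det)
    {W : Submodule ℂ (Fin M → ℂ)} {i : Fin M} (h : Pi.single i (1 : ℂ) ∈ W) :
    Pi.single i (1 : ℂ) ∈ Submodule.map D.mulVecLin W := by
  have hD : D.mulVec (Pi.single i (1 : ℂ)) = (D i i) • (Pi.single i (1 : ℂ) : Fin M → ℂ) := by
    funext j
    rw [Matrix.mulVec_single]
    by_cases hj : j = i
    · subst hj; simp
    · simp [hd hj, Pi.single_eq_of_ne hj]
  have he : Pi.single i (1 : ℂ) = (D i i)⁻¹ • D.mulVec (Pi.single i (1 : ℂ)) := by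
    rw [hD, smul_smul, inv_mul_cancel₀ (diag_ne_zero hd hu i), one_smul]
  rw [he]
  exact Submodule.smul_mem _ _ (Submodule.mem_map_of_mem h)

lemma exists_single_mem {T : Matrix (Fin M) (Fin M) ℂ} (hd : T.IsDiag)
    (hdist : ∀ i j : Fin M, i ≠ j → T i i ≠ T j j)
    {W : Submodule ℂ (Fin M → ℂ)} (hinv : Submodule.map T.mulVecLin W ≤ W)
    (hW : W ≠ ⊥) : ∃ i, Pi.single i (1 : ℂ) ∈ W := by
  obtain ⟨v, hvW, hv0⟩ := Submodule.exists_mem_ne_zero_of_ne_bot hW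
  suffices h : ∀ n : ℕ, ∀ v : Fin M → ℂ, v ∈ W → v ≠ 0 →
      (Finset.univ.filter fun k => v k ≠ 0).card ≤ n → ∃ i, Pi.single i (1 : ℂ) ∈ W by
    exact h M v hvW hv0 (le_trans (Finset.card_filter_le _ _) (by simp))
  intro n
  induction n with
  | zero =>
    intro v hvW hv0 hcard
    exfalso
    apply hv0
    funext k
    rw [Pi.zero_apply]
    by_contra hk
    have : k ∈ Finset.univ.filter fun k => v k ≠ 0 := by simp [hk]
    have h0 := Finset.card_eq_zero.mp (Nat.le_zero.mp hcard)
    rw [h0] at this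
    exact absurd this (Finset.notMem_empty k)
  | succ n ih =>
    intro v hvW hv0 hcard
    obtain ⟨i, hi⟩ : ∃ i, v i ≠ 0 := by
      by_contra h
      push_neg at h
      exact hv0 (funext h)
    by_cases hcase : ∃ j, j ≠ i ∧ v j ≠ 0
    · obtain ⟨j, hji, hj⟩ := hcase
      set w : Fin M → ℂ := T.mulVec v - T j j • v with hw
      have hTv : ∀ k, T.mulVec v k = T k k * v k := by
        intro k
        rw [Matrix.mulVec, dotProduct]
        refine Finset.sum_eq_single k (fun b _ hb => ?_) (by simp)
        rw [hd (Ne.symm hb), zero_mul]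
      have hwk : ∀ k, w k = (T k k - T j j) * v k := by
        intro k
        simp only [hw, Pi.sub_apply, Pi.smul_apply, smul_eq_mul, hTv k]
        ring
      have hwW : w ∈ W := by
        refine Submodule.sub_mem _ (hinv ?_) (Submodule.smul_mem _ _ hvW)
        exact Submodule.mem_map_of_mem hvW
      have hwi : w i ≠ 0 := by
        rw [hwk i]
        exact mul_ne_zero (sub_ne_zero.mpr (hdist i j (Ne.symm hji))) hi
      have hw0 : w ≠ 0 := fun h => hwi (by rw [h]; rfl)
      refine ih w hwW hw0 ?_
      have hsub : (Finset.univ.filter fun k => w k ≠ 0)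
          ⊆ (Finset.univ.filter fun k => v k ≠ 0).erase j := by
        intro k hk
        simp only [Finset.mem_filter, Finset.mem_univ, true_and] at hk
        rw [Finset.mem_erase]
        constructor
        · intro hkj
          subst hkj
          apply hk
          rw [hwk k, sub_self, zero_mul]
        · simp only [Finset.mem_filter, Finset.mem_univ, true_and]
          intro hv
          apply hk
          rw [hwk k, hv, mul_zero]
      have hjm : j ∈ Finset.univ.filter fun k => v k ≠ 0 := by simp [hj]
      have := Finset.card_le_card hsub
      rw [Finset.card_erase_of_mem hjm] at this
      omega
    · push_neg at hcase
      refine ⟨i, ?_⟩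
      have he : Pi.single i (1 : ℂ) = (v i)⁻¹ • v := by
        funext k
        by_cases hk : k = i
        · subst hk
          rw [Pi.smul_apply, smul_eq_mul, inv_mul_cancel₀ hi, Pi.single_eq_same]
        · rw [Pi.smul_apply, smul_eq_mul, hcase k hk, mul_zero, Pi.single_eq_of_ne hk]
      rw [he]
      exact Submodule.smul_mem _ _ hvW

end IAAux

/-- If the full interference alignment conditions hold on an `M`-symbol extension of the
single-antenna 3-user interference channel (all channel matrices diagonal and invertible,
with the cyclic product `T` having pairwise distinct diagonal entries), then the desired
signal subspace and the interference subspace at receiver 1 intersect nontrivially. -/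
theorem stmt_6 (M r : ℕ) (hM : 1 ≤ M) (hr : 1 ≤ r)
    (H11 H12 H13 H21 H23 H31 H32 : Matrix (Fin M) (Fin M) ℂ)
    (hd11 : H11.IsDiag) (hd12 : H12.IsDiag) (hd13 : H13.IsDiag)
    (hd21 : H21.IsDiag) (hd23 : H23.IsDiag) (hd31 : H31.IsDiag) (hd32 : H32.IsDiag)
    (hu11 : IsUnit H11.det) (hu12 : IsUnit H12.det) (hu13 : IsUnit H13.det)
    (hu21 : IsUnit H21.det) (hu23 : IsUnit H23.det)
    (hu31 : IsUnit H31.det) (hu32 : IsUnit H32.det)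
    (hT : ∀ i j : Fin M, i ≠ j →
      (H13⁻¹ * H23 * H21⁻¹ * H12 * H32⁻¹ * H31) i i ≠
      (H13⁻¹ * H23 * H21⁻¹ * H12 * H32⁻¹ * H31) j j)
    (V1 V2 V3 : Matrix (Fin M) (Fin r) ℂ)
    (hrk1 : V1.rank = r) (hrk2 : V2.rank = r) (hrk3 : V3.rank = r)
    (ha1 : LinearMap.range (H13 * V3).mulVecLin = LinearMap.range (H12 * V2).mulVecLin)
    (ha2 : LinearMap.range (H23 * V3).mulVecLin = LinearMap.range (H21 * V1).mulVecLin)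
    (ha3 : LinearMap.range (H32 * V2).mulVecLin = LinearMap.range (H31 * V1).mulVecLin) :
    LinearMap.range (H11 * V1).mulVecLin ⊓ LinearMap.range (H12 * V2).mulVecLin ≠ ⊥ := by
  classical
  rw [IAAux.range_mul, IAAux.range_mul] at ha1 ha2 ha3 ⊢
  set W1 := LinearMap.range V1.mulVecLin with hW1
  set W2 := LinearMap.range V2.mulVecLin with hW2
  set W3 := LinearMap.range V3.mulVecLin with hW3
  -- diagonality facts
  have hd13i : H13⁻¹.IsDiag := IAAux.inv_isDiag hd13 hu13
  have hd21i : H21⁻¹.IsDiag := IAAux.inv_isDiag hd21 hu21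
  have hd32i : H32⁻¹.IsDiag := IAAux.inv_isDiag hd32 hu32
  set T := H13⁻¹ * H23 * H21⁻¹ * H12 * H32⁻¹ * H31 with hTdef
  have hdT : T.IsDiag := by
    exact IAAux.mul_isDiag (IAAux.mul_isDiag (IAAux.mul_isDiag (IAAux.mul_isDiag
      (IAAux.mul_isDiag hd13i hd23) hd21i) hd12) hd32i) hd31
  -- T equals the chain-ordered product
  have hTchain : T = H21⁻¹ * (H23 * (H13⁻¹ * (H12 * (H32⁻¹ * H31)))) := by
    ext i j
    by_cases hij : i = j
    · subst hij
      rw [hTdef]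
      rw [IAAux.mul_diag_apply hd31, IAAux.mul_diag_apply hd32i, IAAux.mul_diag_apply hd12,
        IAAux.mul_diag_apply hd21i, IAAux.mul_diag_apply hd23,
        IAAux.diag_mul_apply hd21i, IAAux.diag_mul_apply hd23, IAAux.diag_mul_apply hd13i,
        IAAux.diag_mul_apply hd12, IAAux.diag_mul_apply hd32i]
      ring
    · rw [hdT hij]
      have : (H21⁻¹ * (H23 * (H13⁻¹ * (H12 * (H32⁻¹ * H31))))).IsDiag :=
        IAAux.mul_isDiag hd21i (IAAux.mul_isDiag hd23 (IAAux.mul_isDiag hd13i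
          (IAAux.mul_isDiag hd12 (IAAux.mul_isDiag hd32i hd31))))
      rw [this hij]
  -- invariance of W1 under T
  have c1 : Submodule.map H32⁻¹.mulVecLin (Submodule.map H31.mulVecLin W1) = W2 := by
    rw [← ha3, IAAux.map_inv_map hu32]
  have c2 : Submodule.map H13⁻¹.mulVecLin (Submodule.map H12.mulVecLin W2) = W3 := by
    rw [← ha1, IAAux.map_inv_map hu13]
  have c3 : Submodule.map H21⁻¹.mulVecLin (Submodule.map H23.mulVecLin W3) = W1 := by
    rw [ha2, IAAux.map_inv_map hu21]
  have hinv : Submodule.map T.mulVecLin W1 = W1 := by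
    rw [hTchain, ← IAAux.map_map, ← IAAux.map_map, ← IAAux.map_map, ← IAAux.map_map,
      ← IAAux.map_map, c1, c2, c3]
  -- W1 is nontrivial
  have hW1ne : W1 ≠ ⊥ := by
    intro h
    rw [Matrix.rank, ← hW1, h, finrank_bot] at hrk1
    omega
  obtain ⟨i, hi⟩ := IAAux.exists_single_mem hdT hT (le_of_eq hinv) hW1ne
  -- conclude
  rw [Submodule.ne_bot_iff]
  refine ⟨Pi.single i (1 : ℂ), Submodule.mem_inf.mpr ⟨?_, ?_⟩, ?_⟩
  · exact IAAux.single_mem_map hd11 hu11 hi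
  · rw [← c1]
    exact IAAux.single_mem_map hd12 hu12 (IAAux.single_mem_map hd32i
      (IAAux.inv_det_isUnit hu32) (IAAux.single_mem_map hd31 hu31 hi))
  · intro h
    have := congrFun h i
    rw [Pi.single_eq_same] at this
    exact one_ne_zero this
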